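/- Let P_f be a non-local n-partite full-correlation box. Then the minimum L^1 distance from P_f to a local box equals the minimum L^1 distance from P_f to a local full-correlation box; i.e., among the local boxes closest to P_f (in L^1 norm over all inputs and outputs), there is one that is itself a full-correlation box. -/

import Mathlib

open Finset

noncomputable section

/-- An `n`-partite box: conditional distribution `P x a` of outputs `a` given inputs `x`,
with binary inputs/outputs modeled as `ZMod 2`. -/
abbrev Box (n : ℕ) := (Fin n → ZMod 2) → (Fin n → ZMod 2) → ℝ

/-- Non-signaling: for every subset `S` of parties, the marginal of the outputs in `S`
depends only on the inputs in `S`. -/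
def IsNonSignaling {n : ℕ} (P : Box n) : Prop :=
  ∀ (S : Finset (Fin n)) (x x' : Fin n → ZMod 2), (∀ i ∈ S, x i = x' i) →
    ∀ aS : Fin n → ZMod 2,
      ∑ a ∈ Finset.univ.filter (fun a : Fin n → ZMod 2 => ∀ i ∈ S, a i = aS i), P x a =
      ∑ a ∈ Finset.univ.filter (fun a : Fin n → ZMod 2 => ∀ i ∈ S, a i = aS i), P x' a

/-- A non-signaling box: nonnegative, normalized, non-signaling. -/
def IsNSBox {n : ℕ} (P : Box n) : Prop :=
  (∀ x a, 0 ≤ P x a) ∧ (∀ x, ∑ a, P x a = 1) ∧ IsNonSignaling P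

/-- The full-correlation box associated to the Boolean function `f`. -/
def FCB (n : ℕ) (f : (Fin n → ZMod 2) → ZMod 2) : Box n :=
  fun x a => if (∑ i, a i) = f x then ((2:ℝ)^(n-1))⁻¹ else 0

/-- The `n`-partite Popescu–Rohrlich box. -/
def nPR (n : ℕ) : Box n := FCB n (fun x => ∏ i, x i)

/-- The local box with uniformly correlated outputs of even parity. -/
def Pc (n : ℕ) : Box n := FCB n (fun _ => 0)

/-- Extremality in the non-signaling polytope. -/
def IsExtremalNS {n : ℕ} (P : Box n) : Prop :=
  IsNSBox P ∧ ∀ (ε : ℝ) (P1 P2 : Box n), 0 < ε → ε < 1 → IsNSBox P1 → IsNSBox P2 →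
    (∀ x a, P x a = ε * P1 x a + (1 - ε) * P2 x a) → P1 = P ∧ P2 = P

/-- Locality: convex combination of products of single-party conditional distributions. -/
def IsLocal {n : ℕ} (P : Box n) : Prop :=
  ∃ (m : ℕ) (q : Fin m → ℝ) (s : Fin m → Fin n → ZMod 2 → ZMod 2 → ℝ),
    (∀ r, 0 ≤ q r) ∧ (∑ r, q r = 1) ∧
    (∀ r i xi ai, 0 ≤ s r i xi ai) ∧ (∀ r i xi, ∑ ai : ZMod 2, s r i xi ai = 1) ∧
    ∀ x a, P x a = ∑ r, q r * ∏ i, s r i (x i) (a i)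

/-- `f` is affine: a constant XORed with a subset of the input bits. -/
def IsAffine {n : ℕ} (f : (Fin n → ZMod 2) → ZMod 2) : Prop :=
  ∃ (c : ZMod 2) (S : Finset (Fin n)), ∀ x, f x = c + ∑ i ∈ S, x i

/-- L¹ distance between boxes. -/
def L1dist {n : ℕ} (P Q : Box n) : ℝ := ∑ x, ∑ a, |P x a - Q x a|

namespace AuxFC

/-- The ±1 character of a bit. -/
def χ (b : ZMod 2) : ℝ := if b = 0 then 1 else -1

lemma χ_add (a b : ZMod 2) : χ (a + b) = χ a * χ b := by
  rcases (by decide : ∀ v : ZMod 2, v = 0 ∨ v = 1) a with rfl | rfl <;>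
    rcases (by decide : ∀ v : ZMod 2, v = 0 ∨ v = 1) b with rfl | rfl <;>
    simp [χ, show (1:ZMod 2) + 1 = 0 from rfl]

lemma χ_zero : χ 0 = 1 := by norm_num [χ]

lemma χ_mul_le (b : ZMod 2) (u : ℝ) : χ b * u ≤ |u| := by
  fin_cases b <;> simp [χ]
  · exact le_abs_self u
  · exact neg_le_abs u

lemma prod_χ {ι : Type*} (s : Finset ι) (v : ι → ZMod 2) :
    ∏ i ∈ s, χ (v i) = χ (∑ i ∈ s, v i) := by
  induction s using Finset.cons_induction with
  | empty => simp [χ_zero]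
  | cons i s hi ih => rw [Finset.prod_cons, Finset.sum_cons, ih, χ_add]

lemma card_parity (m : ℕ) (b : ZMod 2) :
    (Finset.univ.filter fun a : Fin (m+1) → ZMod 2 => ∑ i, a i = b).card = 2 ^ m := by
  have e : {a : Fin (m+1) → ZMod 2 // ∑ i, a i = b} ≃ (Fin m → ZMod 2) :=
    { toFun := fun a j => a.1 j.succ
      invFun := fun v => ⟨Fin.cons (b - ∑ j, v j) v, by
        rw [Fin.sum_cons]; ring⟩
      left_inv := by
        rintro ⟨a, ha⟩
        ext j
        have h0 : b - ∑ j, a (Fin.succ j) = a 0 := by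
          rw [← ha, Fin.sum_univ_succ]; ring
        simp only [h0]
        exact congrFun (Fin.cons_self_tail a) j
      right_inv := fun v => by
        ext j; simp }
  have := Fintype.card_congr e
  rw [Fintype.card_subtype] at this
  rw [this]
  simp

lemma FCB_nonneg (n : ℕ) (f : (Fin n → ZMod 2) → ZMod 2) (x a) : 0 ≤ FCB n f x a := by
  unfold FCB; positivity

lemma sum_FCB (m : ℕ) (f : (Fin (m+1) → ZMod 2) → ZMod 2) (x) :
    ∑ a, FCB (m+1) f x a = 1 := by
  unfold FCB
  rw [Finset.sum_ite, Finset.sum_const, Finset.sum_const_zero, add_zero, card_parity,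
    nsmul_eq_mul]
  simp only [Nat.add_sub_cancel, Nat.cast_pow, Nat.cast_ofNat]
  rw [mul_inv_cancel₀ (by positivity)]

/-- Upper bound on the L¹ distance between two full-correlation boxes. -/
lemma L1_FCB_le (m : ℕ) (f g : (Fin (m+1) → ZMod 2) → ZMod 2) :
    L1dist (FCB (m+1) f) (FCB (m+1) g) ≤
      2 * ((Finset.univ.filter fun x => f x ≠ g x).card : ℝ) := by
  unfold L1dist
  have key : ∀ x, ∑ a, |FCB (m+1) f x a - FCB (m+1) g x a| ≤
      if f x = g x then 0 else 2 := by
    intro x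
    by_cases h : f x = g x
    · simp only [h, if_true]
      apply le_of_eq
      apply Finset.sum_eq_zero
      intro a _
      simp [FCB, h]
    · simp only [h, if_false]
      calc ∑ a, |FCB (m+1) f x a - FCB (m+1) g x a|
          ≤ ∑ a, (FCB (m+1) f x a + FCB (m+1) g x a) := by
            apply Finset.sum_le_sum
            intro a _
            have := abs_sub (FCB (m+1) f x a) (FCB (m+1) g x a)
            calc |FCB (m+1) f x a - FCB (m+1) g x a| ≤
                |FCB (m+1) f x a| + |FCB (m+1) g x a| := abs_sub _ _
              _ = FCB (m+1) f x a + FCB (m+1) g x a := by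
                  rw [abs_of_nonneg (FCB_nonneg _ _ _ _), abs_of_nonneg (FCB_nonneg _ _ _ _)]
        _ = 2 := by rw [Finset.sum_add_distrib, sum_FCB, sum_FCB]; norm_num
  calc ∑ x, ∑ a, |FCB (m+1) f x a - FCB (m+1) g x a|
      ≤ ∑ x, if f x = g x then (0:ℝ) else 2 := Finset.sum_le_sum fun x _ => key x
    _ = 2 * ((Finset.univ.filter fun x => f x ≠ g x).card : ℝ) := by
        rw [Finset.sum_ite, Finset.sum_const, Finset.sum_const, smul_zero, zero_add,
          nsmul_eq_mul, mul_comm]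

/-- FCB of an affine function is local. -/
lemma local_affine (m : ℕ) (c : ZMod 2) (S : Finset (Fin (m+1))) :
    IsLocal (FCB (m+1) (fun x => c + ∑ i ∈ S, x i)) := by
  classical
  -- single party behaviors indexed by hidden variable t : Fin (m+1) → ZMod 2
  set σ : Fin (m+1) → ZMod 2 → ZMod 2 :=
    fun i xi => (if i ∈ S then xi else 0) + (if i = 0 then c else 0) with hσ
  have hσsum : ∀ x : Fin (m+1) → ZMod 2, ∑ i, σ i (x i) = c + ∑ i ∈ S, x i := by
    intro x
    rw [Finset.sum_add_distrib, Finset.sum_ite_mem, Finset.univ_inter]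
    have h0 : ∑ i : Fin (m+1), (if i = 0 then c else 0) = c := by simp
    rw [h0, add_comm]
  have hcard : Fintype.card (Fin (m+1) → ZMod 2) = 2 ^ (m+1) := by simp
  set E : Fin (2 ^ (m+1)) ≃ (Fin (m+1) → ZMod 2) := (Fintype.equivFinOfCardEq hcard).symm
  refine ⟨2 ^ (m+1), fun r => if ∑ i, E r i = 0 then ((2:ℝ)^m)⁻¹ else 0,
    fun r i xi ai => if ai = E r i + σ i xi then 1 else 0, ?_, ?_, ?_, ?_, ?_⟩
  · intro r; positivity
  · rw [Equiv.sum_comp E (fun t => if ∑ i, t i = 0 then ((2:ℝ)^m)⁻¹ else 0)]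
    rw [Finset.sum_ite, Finset.sum_const, Finset.sum_const_zero, add_zero, card_parity,
      nsmul_eq_mul]
    simp only [Nat.cast_pow, Nat.cast_ofNat]
    rw [mul_inv_cancel₀ (by positivity)]
  · intro r i xi ai; positivity
  · intro r i xi
    rw [Finset.sum_ite_eq' Finset.univ (E r i + σ i xi) (fun _ => (1:ℝ))]
    simp
  · intro x a
    rw [Equiv.sum_comp E
      (fun t => (if ∑ i, t i = 0 then ((2:ℝ)^m)⁻¹ else 0) *
        ∏ i, if a i = t i + σ i (x i) then (1:ℝ) else 0)]
    symm
    have hprod : ∀ t : Fin (m+1) → ZMod 2,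
        (∏ i, if a i = t i + σ i (x i) then (1:ℝ) else 0) =
          if t = (fun i => a i - σ i (x i)) then 1 else 0 := by
      intro t
      rw [Fintype.prod_boole]
      congr 1
      simp only [eq_iff_iff]
      constructor
      · intro h; funext i; rw [h i]; ring
      · intro h i; rw [congrFun h i]; ring
    calc (∑ t : Fin (m+1) → ZMod 2, (if ∑ i, t i = 0 then ((2:ℝ)^m)⁻¹ else 0) *
          ∏ i, if a i = t i + σ i (x i) then (1:ℝ) else 0)
        = ∑ t : Fin (m+1) → ZMod 2, (if ∑ i, t i = 0 then ((2:ℝ)^m)⁻¹ else 0) *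
          (if t = (fun i => a i - σ i (x i)) then (1:ℝ) else 0) := by
          apply Finset.sum_congr rfl; intro t _; rw [hprod t]
      _ = (if ∑ i, (a i - σ i (x i)) = 0 then ((2:ℝ)^m)⁻¹ else 0) := by
          rw [Finset.sum_eq_single (fun i => a i - σ i (x i))]
          · simp
          · intro t _ ht; simp [ht]
          · intro h; exact absurd (Finset.mem_univ _) h
      _ = FCB (m+1) (fun x => c + ∑ i ∈ S, x i) x a := by
          unfold FCB
          have : ∑ i, (a i - σ i (x i)) = ∑ i, a i - (c + ∑ i ∈ S, x i) := by
            rw [Finset.sum_sub_distrib, hσsum]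
          rw [this]
          have hiff : (∑ i, a i - (c + ∑ i ∈ S, x i) = 0) ↔
              (∑ i, a i = c + ∑ i ∈ S, x i) := sub_eq_zero
          simp only [hiff]
          norm_num [Nat.add_sub_cancel]

/-- the update of a two-index family at one point -/
def upd {n : ℕ} (e : Fin n → ZMod 2 → ℝ) (i : Fin n) (b : ZMod 2) (t : ℝ) :
    Fin n → ZMod 2 → ℝ :=
  fun j b' => if j = i ∧ b' = b then t else e j b'

lemma rounding {n : ℕ} (cf : (Fin n → ZMod 2) → ℝ) (T : Finset (Fin n × ZMod 2)) :
    ∀ (e : Fin n → ZMod 2 → ℝ), (∀ i b, |e i b| ≤ 1) →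
      (∀ p : Fin n × ZMod 2, p ∉ T → e p.1 p.2 = 1 ∨ e p.1 p.2 = -1) →
      ∃ ε : Fin n → ZMod 2 → ZMod 2,
        ∑ x, cf x * ∏ i, e i (x i) ≤ ∑ x, cf x * ∏ i, χ (ε i (x i)) := by
  classical
  induction T using Finset.induction with
  | empty =>
    intro e h1 h2
    refine ⟨fun i b => if e i b = 1 then 0 else 1, le_of_eq ?_⟩
    apply Finset.sum_congr rfl; intro x _
    congr 1
    apply Finset.prod_congr rfl; intro i _
    rcases h2 (i, x i) (by simp) with h | h <;> simp [χ, h] <;> norm_num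
  | @insert pr T hpr ih =>
    intro e h1 h2
    obtain ⟨i, b⟩ := pr
    -- the sum is affine in the variable e i b
    have key : ∀ t : ℝ, ∑ x, cf x * ∏ j, upd e i b t j (x j) =
        (∑ x ∈ Finset.univ.filter (fun x : Fin n → ZMod 2 => x i = b),
          cf x * ∏ j ∈ Finset.univ.erase i, e j (x j)) * t +
        ∑ x ∈ Finset.univ.filter (fun x : Fin n → ZMod 2 => ¬ x i = b),
          cf x * ∏ j, e j (x j) := by
      intro t
      rw [← Finset.sum_filter_add_sum_filter_not Finset.univ
        (fun x : Fin n → ZMod 2 => x i = b), Finset.sum_mul]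
      congr 1
      · apply Finset.sum_congr rfl
        intro x hx
        simp only [Finset.mem_filter] at hx
        rw [← Finset.mul_prod_erase Finset.univ _ (Finset.mem_univ i)]
        have h1' : upd e i b t i (x i) = t := by simp [upd, hx.2]
        have h2' : ∏ j ∈ Finset.univ.erase i, upd e i b t j (x j) =
            ∏ j ∈ Finset.univ.erase i, e j (x j) := by
          apply Finset.prod_congr rfl
          intro j hj
          have : j ≠ i := (Finset.mem_erase.mp hj).1
          simp [upd, this]
        rw [h1', h2']; ring
      · apply Finset.sum_congr rfl
        intro x hx
        simp only [Finset.mem_filter] at hx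
        congr 1
        apply Finset.prod_congr rfl
        intro j _
        by_cases hj : j = i
        · subst hj; simp [upd, hx.2]
        · simp [upd, hj]
    have hee : e = upd e i b (e i b) := by
      funext j b'
      unfold upd
      by_cases h : j = i ∧ b' = b
      · rw [if_pos h, h.1, h.2]
      · rw [if_neg h]
    -- pick the better endpoint
    have hstep : ∃ t : ℝ, (t = 1 ∨ t = -1) ∧
        ∑ x, cf x * ∏ j, e j (x j) ≤ ∑ x, cf x * ∏ j, upd e i b t j (x j) := by
      have hb := abs_le.mp (h1 i b)
      by_cases hB : 0 ≤ ∑ x ∈ Finset.univ.filter (fun x : Fin n → ZMod 2 => x i = b),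
          cf x * ∏ j ∈ Finset.univ.erase i, e j (x j)
      · refine ⟨1, Or.inl rfl, ?_⟩
        conv_lhs => rw [hee]
        rw [key, key]
        have := mul_le_mul_of_nonneg_left hb.2 hB
        nlinarith [hB, hb.2]
      · refine ⟨-1, Or.inr rfl, ?_⟩
        conv_lhs => rw [hee]
        rw [key, key]
        push_neg at hB
        nlinarith [hb.1]
    obtain ⟨t, ht, hle⟩ := hstep
    have h1' : ∀ j b', |upd e i b t j b'| ≤ 1 := by
      intro j b'
      unfold upd
      by_cases h : j = i ∧ b' = b
      · rw [if_pos h]; rcases ht with rfl | rfl <;> norm_num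
      · rw [if_neg h]; exact h1 j b'
    have h2' : ∀ p : Fin n × ZMod 2, p ∉ T →
        upd e i b t p.1 p.2 = 1 ∨ upd e i b t p.1 p.2 = -1 := by
      intro p hp
      unfold upd
      by_cases h : p.1 = i ∧ p.2 = b
      · rw [if_pos h]; exact ht
      · rw [if_neg h]
        apply h2
        intro hmem
        rcases Finset.mem_insert.mp hmem with h' | h'
        · exact h ⟨by rw [h'], by rw [h']⟩
        · exact hp h'
    obtain ⟨ε, hε⟩ := ih (upd e i b t) h1' h2'
    exact ⟨ε, le_trans hle hε⟩

lemma χ_one : χ (1 : ZMod 2) = -1 := by rw [χ, if_neg (by decide)]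

lemma add_eq_zero_iff' (a b : ZMod 2) : a + b = 0 ↔ a = b := by revert a b; decide

lemma chi_corr (n : ℕ) (f g : (Fin n → ZMod 2) → ZMod 2) :
    ∑ x, χ (f x) * χ (g x) =
      2 ^ n - 2 * ((Finset.univ.filter fun x => f x ≠ g x).card : ℝ) := by
  classical
  have key : ∀ x : Fin n → ZMod 2,
      χ (f x) * χ (g x) = 1 - 2 * (if f x ≠ g x then (1:ℝ) else 0) := by
    intro x
    rw [← χ_add]
    unfold χ
    simp only [add_eq_zero_iff', ne_eq]
    by_cases h : f x = g x <;> simp [h] <;> norm_num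
  rw [Finset.sum_congr rfl (fun x _ => key x), Finset.sum_sub_distrib, Finset.sum_const,
    ← Finset.mul_sum, Finset.sum_boole]
  simp

lemma affine_rep {n : ℕ} (ε : Fin n → ZMod 2 → ZMod 2) :
    ∃ (c : ZMod 2) (S : Finset (Fin n)), ∀ x : Fin n → ZMod 2,
      (∑ i, ε i (x i)) = c + ∑ i ∈ S, x i := by
  classical
  refine ⟨∑ i, ε i 0, Finset.univ.filter (fun i => ε i 0 + ε i 1 = 1), fun x => ?_⟩
  have hpt : ∀ i, ε i (x i) = ε i 0 + (if ε i 0 + ε i 1 = 1 then x i else 0) := by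
    intro i
    rcases (by decide : ∀ v : ZMod 2, v = 0 ∨ v = 1) (x i) with h | h <;> rw [h]
    · simp
    · exact (by decide : ∀ u v : ZMod 2, v = u + (if u + v = 1 then 1 else 0)) (ε i 0) (ε i 1)
  simp only [hpt]
  rw [Finset.sum_add_distrib, Finset.sum_filter]

lemma lower_bound (m : ℕ) (f : (Fin (m+1) → ZMod 2) → ZMod 2) (Q : Box (m+1))
    (hQl : IsLocal Q) (D : ℝ)
    (hD : ∀ (c : ZMod 2) (S : Finset (Fin (m+1))),
      D ≤ ((Finset.univ.filter fun x => f x ≠ c + ∑ i ∈ S, x i).card : ℝ)) :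
    2 * D ≤ L1dist (FCB (m+1) f) Q := by
  classical
  obtain ⟨M, q, s, hq0, hq1, hs0, hs1, hQ⟩ := hQl
  set e : Fin M → Fin (m+1) → ZMod 2 → ℝ := fun r i xi => s r i xi 0 - s r i xi 1 with he
  have hsum2 : ∀ r i xi, s r i xi 0 + s r i xi 1 = 1 := by
    intro r i xi
    rw [← hs1 r i xi]
    exact (Fin.sum_univ_two _).symm
  have he1 : ∀ r i xi, |e r i xi| ≤ 1 := by
    intro r i xi
    have h0 := hs0 r i xi 0; have h1' := hs0 r i xi 1
    have hs := hsum2 r i xi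
    rw [abs_le]
    constructor <;> simp only [he] <;> linarith
  -- step B1
  have hB1 : ∀ x, ∑ a, χ (f x + ∑ i, a i) * FCB (m+1) f x a = 1 := by
    intro x
    have hterm : ∀ a : Fin (m+1) → ZMod 2,
        χ (f x + ∑ i, a i) * FCB (m+1) f x a = FCB (m+1) f x a := by
      intro a
      by_cases h : (∑ i, a i) = f x
      · rw [h, CharTwo.add_self_eq_zero, χ_zero, one_mul]
      · have hz : FCB (m+1) f x a = 0 := if_neg h
        rw [hz, mul_zero]
    rw [Finset.sum_congr rfl (fun a _ => hterm a), sum_FCB]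
  -- step B2
  have hchi : ∀ i : Fin (m+1), ∀ r xi, ∑ b : ZMod 2, χ b * s r i xi b = e r i xi := by
    intro i r xi
    have h2 : ∑ b : ZMod 2, χ b * s r i xi b = χ 0 * s r i xi 0 + χ 1 * s r i xi 1 :=
      Fin.sum_univ_two _
    rw [h2, χ_zero, χ_one, he]; ring
  have hB2 : ∀ x, ∑ a, χ (f x + ∑ i, a i) * Q x a
      = χ (f x) * ∑ r, q r * ∏ i, e r i (x i) := by
    intro x
    calc ∑ a, χ (f x + ∑ i, a i) * Q x a
        = ∑ a : Fin (m+1) → ZMod 2, ∑ r,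
            q r * (χ (f x) * ∏ i, (χ (a i) * s r i (x i) (a i))) := by
          apply Finset.sum_congr rfl; intro a _
          rw [hQ x a, Finset.mul_sum]
          apply Finset.sum_congr rfl; intro r _
          rw [χ_add, ← prod_χ Finset.univ (fun i => a i), Finset.prod_mul_distrib]
          ring
      _ = ∑ r, q r * (χ (f x) *
            ∑ a : Fin (m+1) → ZMod 2, ∏ i, (χ (a i) * s r i (x i) (a i))) := by
          rw [Finset.sum_comm]
          apply Finset.sum_congr rfl; intro r _
          rw [Finset.mul_sum, Finset.mul_sum]
      _ = χ (f x) * ∑ r, q r * ∏ i, e r i (x i) := by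
          rw [Finset.mul_sum]
          apply Finset.sum_congr rfl; intro r _
          rw [← Fintype.prod_sum (fun i (b : ZMod 2) => χ b * s r i (x i) b)]
          simp only [fun i => hchi i r (x i)]
          ring
  -- per-r correlation bound
  have hr : ∀ r, ∑ x, χ (f x) * ∏ i, e r i (x i) ≤ 2 ^ (m+1) - 2 * D := by
    intro r
    obtain ⟨ε, hε⟩ := rounding (fun x => χ (f x)) Finset.univ (e r) (he1 r)
      (fun p hp => absurd (Finset.mem_univ p) hp)
    obtain ⟨c, S, hcs⟩ := affine_rep ε
    calc ∑ x, χ (f x) * ∏ i, e r i (x i)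
        ≤ ∑ x, χ (f x) * ∏ i, χ (ε i (x i)) := hε
      _ = ∑ x, χ (f x) * χ (c + ∑ i ∈ S, x i) := by
          apply Finset.sum_congr rfl; intro x _
          rw [prod_χ Finset.univ (fun i => ε i (x i)), hcs x]
      _ = 2 ^ (m+1) - 2 * ((Finset.univ.filter
            fun x => f x ≠ c + ∑ i ∈ S, x i).card : ℝ) := chi_corr (m+1) f _
      _ ≤ 2 ^ (m+1) - 2 * D := by
          have := hD c S; linarith
  -- combine
  have hswap : ∑ x, χ (f x) * ∑ r, q r * ∏ i, e r i (x i)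
      = ∑ r, q r * ∑ x, χ (f x) * ∏ i, e r i (x i) := by
    calc ∑ x, χ (f x) * ∑ r, q r * ∏ i, e r i (x i)
        = ∑ x, ∑ r, q r * (χ (f x) * ∏ i, e r i (x i)) := by
          apply Finset.sum_congr rfl; intro x _
          rw [Finset.mul_sum]
          apply Finset.sum_congr rfl; intro r _; ring
      _ = ∑ r, ∑ x, q r * (χ (f x) * ∏ i, e r i (x i)) := Finset.sum_comm
      _ = ∑ r, q r * ∑ x, χ (f x) * ∏ i, e r i (x i) := by
          apply Finset.sum_congr rfl; intro r _
          rw [Finset.mul_sum]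
  have hrsum : ∑ r, q r * ∑ x, χ (f x) * ∏ i, e r i (x i) ≤ 2 ^ (m+1) - 2 * D := by
    calc ∑ r, q r * ∑ x, χ (f x) * ∏ i, e r i (x i)
        ≤ ∑ r, q r * (2 ^ (m+1) - 2 * D) :=
          Finset.sum_le_sum fun r _ => mul_le_mul_of_nonneg_left (hr r) (hq0 r)
      _ = 2 ^ (m+1) - 2 * D := by rw [← Finset.sum_mul, hq1, one_mul]
  have hcardu : ((Finset.univ : Finset (Fin (m+1) → ZMod 2)).card : ℝ) = 2 ^ (m+1) := by
    simp [Finset.card_univ]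
  calc 2 * D
      = 2 ^ (m+1) - (2 ^ (m+1) - 2 * D) := by ring
    _ ≤ 2 ^ (m+1) - ∑ x, χ (f x) * ∑ r, q r * ∏ i, e r i (x i) := by
        rw [hswap]; linarith [hrsum]
    _ = ∑ x : Fin (m+1) → ZMod 2,
          (1 - χ (f x) * ∑ r, q r * ∏ i, e r i (x i)) := by
        rw [Finset.sum_sub_distrib, Finset.sum_const, nsmul_eq_mul, mul_one, hcardu]
    _ = ∑ x, ∑ a, χ (f x + ∑ i, a i) * (FCB (m+1) f x a - Q x a) := by
        apply Finset.sum_congr rfl; intro x _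
        have : ∑ a, χ (f x + ∑ i, a i) * (FCB (m+1) f x a - Q x a)
            = (∑ a, χ (f x + ∑ i, a i) * FCB (m+1) f x a)
              - ∑ a, χ (f x + ∑ i, a i) * Q x a := by
          rw [← Finset.sum_sub_distrib]
          apply Finset.sum_congr rfl; intro a _; ring
        rw [this, hB1, hB2]
    _ ≤ ∑ x, ∑ a, |FCB (m+1) f x a - Q x a| :=
        Finset.sum_le_sum fun x _ => Finset.sum_le_sum fun a _ => χ_mul_le _ _
    _ = L1dist (FCB (m+1) f) Q := rfl

end AuxFC

/-- among the local boxes closest (in L¹ norm) to a non-local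
full-correlation box there is a local full-correlation box. -/
theorem closest_local_box_is_full_correlation (n : ℕ) (hn : 1 ≤ n)
    (f : (Fin n → ZMod 2) → ZMod 2) (hnl : ¬ IsLocal (FCB n f)) :
    ∃ g : (Fin n → ZMod 2) → ZMod 2, IsAffine g ∧ IsLocal (FCB n g) ∧
      ∀ Q : Box n, IsLocal Q → L1dist (FCB n f) (FCB n g) ≤ L1dist (FCB n f) Q := by
  classical
  obtain ⟨m, rfl⟩ : ∃ m, n = m + 1 := ⟨n - 1, by omega⟩
  obtain ⟨p, hp⟩ := Finite.exists_min (fun p : ZMod 2 × Finset (Fin (m+1)) =>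
    (Finset.univ.filter fun x => f x ≠ p.1 + ∑ i ∈ p.2, x i).card)
  obtain ⟨c, S⟩ := p
  refine ⟨fun x => c + ∑ i ∈ S, x i, ⟨c, S, fun x => rfl⟩, AuxFC.local_affine m c S, ?_⟩
  intro Q hQ
  have h1 := AuxFC.L1_FCB_le m f (fun x => c + ∑ i ∈ S, x i)
  have h2 := AuxFC.lower_bound m f Q hQ
    ((Finset.univ.filter fun x => f x ≠ c + ∑ i ∈ S, x i).card : ℝ)
    (fun c' S' => Nat.cast_le.mpr (hp (c', S')))
  linarith
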